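/- For real s > 1 and integers M ≥ 1 and k ≥ 2(M+1), the middle convolution tail satisfies ∑_{j=M+1}^{k−M−1} 1/(j^s (k−j)^s) ≤ (2^{s+1}/(k^s (s−1)))·(1/M^{s−1} − 1/(k/2)^{s−1}). -/

import Mathlib

open Finset

/-- Integral comparison: tail of the zeta series. -/
lemma sum_inv_rpow_le_aux {s : ℝ} (hs : 1 < s) {M N : ℕ} (hM : 1 ≤ M) (hMN : M ≤ N) :
    ∑ j ∈ Finset.Ioc M N, 1 / (j : ℝ) ^ s ≤
      (1 / (M : ℝ) ^ (s - 1) - 1 / (N : ℝ) ^ (s - 1)) / (s - 1) := by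
  have hM0 : (0:ℝ) < M := by exact_mod_cast hM
  have hN0 : (0:ℝ) < N := lt_of_lt_of_le hM0 (by exact_mod_cast hMN)
  have hf : AntitoneOn (fun x : ℝ => x ^ (-s)) (Set.Icc (M:ℝ) (N:ℝ)) := by
    intro x hx y hy hxy
    exact Real.rpow_le_rpow_of_nonpos (lt_of_lt_of_le hM0 hx.1) hxy (by linarith)
  have key := AntitoneOn.sum_le_integral_Ico (by exact_mod_cast hMN) hf
  have hsum : ∑ j ∈ Finset.Ioc M N, 1 / (j : ℝ) ^ s
      = ∑ i ∈ Finset.Ico M N, ((i + 1 : ℕ) : ℝ) ^ (-s) := by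
    have hmap : Finset.Ioc M N = (Finset.Ico M N).map (addRightEmbedding 1) := by
      rw [Finset.map_add_right_Ico]
      rw [Finset.Ico_add_one_right_eq_Icc, Finset.Icc_add_one_left_eq_Ioc]
    rw [hmap, Finset.sum_map]
    refine Finset.sum_congr rfl fun i _ => ?_
    simp only [addRightEmbedding_apply]
    rw [Real.rpow_neg (by positivity), one_div]
  have hint : ∫ x in (M:ℝ)..(N:ℝ), x ^ (-s)
      = ((N:ℝ) ^ (-s + 1) - (M:ℝ) ^ (-s + 1)) / (-s + 1) := by
    apply integral_rpow
    right
    constructor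
    · intro h; linarith [h]
    · rw [Set.uIcc_of_le (by exact_mod_cast hMN)]
      intro h
      exact absurd h.1 (by linarith)
  rw [hsum]
  refine key.trans ?_
  rw [hint]
  rw [show (-s + 1 : ℝ) = -(s-1) by ring, Real.rpow_neg hM0.le, Real.rpow_neg hN0.le,
    one_div, one_div, div_neg, ← neg_div, neg_sub]

theorem middle_convolution_bound
    (s : ℝ) (hs : 1 < s) (M k : ℕ) (hM : 1 ≤ M) (hk : 2 * (M + 1) ≤ k) :
    (∑ j ∈ Finset.Icc (M + 1) (k - M - 1),
        1 / ((j : ℝ) ^ s * ((k - j : ℕ) : ℝ) ^ s)) ≤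
      (2 : ℝ) ^ (s + 1) / ((k : ℝ) ^ s * (s - 1)) *
        (1 / (M : ℝ) ^ (s - 1) - 1 / ((k : ℝ) / 2) ^ (s - 1)) := by
  have hs1 : (0:ℝ) < s - 1 := by linarith
  set N := k / 2 with hN
  have hk4 : 4 ≤ k := by omega
  have hMN : M < N := by omega
  have hNk : N ≤ k - M - 1 := by omega
  have hK0 : (0:ℝ) < k := by exact_mod_cast (by omega : 0 < k)
  have hNle : (N:ℝ) ≤ (k:ℝ) / 2 := by
    rw [le_div_iff₀ (by norm_num)]
    exact_mod_cast (by omega : N * 2 ≤ k)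
  have hNge : (k:ℝ) ≤ 2 * (N:ℝ) + 2 := by
    exact_mod_cast (by omega : k ≤ 2 * N + 2)
  have hc : (0:ℝ) < ((k:ℝ)/2) ^ s := by positivity
  rw [Finset.Icc_add_one_left_eq_Ioc, ← Finset.sum_Ioc_consecutive _ (le_of_lt hMN) hNk]
  set A := ∑ j ∈ Finset.Ioc M N, 1 / (j : ℝ) ^ s with hA
  have hbound1 : ∑ j ∈ Finset.Ioc M N, 1 / ((j : ℝ) ^ s * ((k - j : ℕ) : ℝ) ^ s)
      ≤ (1 / ((k:ℝ)/2) ^ s) * A := by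
    rw [hA, Finset.mul_sum]
    refine Finset.sum_le_sum fun j hj => ?_
    simp only [Finset.mem_Ioc] at hj
    have hj0 : (0:ℝ) < j := by exact_mod_cast (by omega : 0 < j)
    have hkj : ((k:ℝ)/2) ≤ ((k - j : ℕ) : ℝ) := by
      rw [Nat.cast_sub (by omega)]
      have : (j:ℝ) ≤ (N:ℝ) := by exact_mod_cast hj.2
      linarith
    have h1 : ((k:ℝ)/2) ^ s ≤ ((k - j : ℕ) : ℝ) ^ s :=
      Real.rpow_le_rpow (by positivity) hkj (by linarith)
    rw [div_mul_div_comm, one_mul]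
    apply one_div_le_one_div_of_le (by positivity)
    calc ((k:ℝ)/2) ^ s * (j:ℝ) ^ s ≤ ((k - j : ℕ) : ℝ) ^ s * (j:ℝ) ^ s :=
          mul_le_mul_of_nonneg_right h1 (by positivity)
      _ = (j:ℝ) ^ s * ((k - j : ℕ) : ℝ) ^ s := mul_comm _ _
  have hbound2 : ∑ j ∈ Finset.Ioc N (k - M - 1), 1 / ((j : ℝ) ^ s * ((k - j : ℕ) : ℝ) ^ s)
      ≤ (1 / ((k:ℝ)/2) ^ s) * A := by
    have step1 : ∑ j ∈ Finset.Ioc N (k - M - 1), 1 / ((j : ℝ) ^ s * ((k - j : ℕ) : ℝ) ^ s)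
        ≤ (1 / ((k:ℝ)/2) ^ s) * ∑ j ∈ Finset.Ioc N (k - M - 1), 1 / ((k - j : ℕ) : ℝ) ^ s := by
      rw [Finset.mul_sum]
      refine Finset.sum_le_sum fun j hj => ?_
      simp only [Finset.mem_Ioc] at hj
      have hkj0 : (0:ℝ) < ((k - j : ℕ) : ℝ) := by
        exact_mod_cast (by omega : 0 < k - j)
      have hjge : ((k:ℝ)/2) ≤ (j:ℝ) := by
        have : (N:ℝ) + 1 ≤ (j:ℝ) := by exact_mod_cast (by omega : N + 1 ≤ j)
        linarith
      have h1 : ((k:ℝ)/2) ^ s ≤ (j:ℝ) ^ s :=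
        Real.rpow_le_rpow (by positivity) hjge (by linarith)
      rw [div_mul_div_comm, one_mul]
      apply one_div_le_one_div_of_le (by positivity)
      exact mul_le_mul_of_nonneg_right h1 (by positivity)
    have step2 : ∑ j ∈ Finset.Ioc N (k - M - 1), 1 / ((k - j : ℕ) : ℝ) ^ s ≤ A := by
      rw [hA]
      have hinj : ∀ x ∈ Finset.Ioc N (k - M - 1), ∀ y ∈ Finset.Ioc N (k - M - 1),
          k - x = k - y → x = y := by
        intro x hx y hy h
        simp only [Finset.mem_Ioc] at hx hy
        omega
      calc ∑ j ∈ Finset.Ioc N (k - M - 1), 1 / ((k - j : ℕ) : ℝ) ^ s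
          = ∑ i ∈ (Finset.Ioc N (k - M - 1)).image (fun j => k - j), 1 / (i : ℝ) ^ s :=
            (Finset.sum_image (f := fun i : ℕ => 1 / (i : ℝ) ^ s) hinj).symm
        _ ≤ ∑ j ∈ Finset.Ioc M N, 1 / (j : ℝ) ^ s := ?_
      apply Finset.sum_le_sum_of_subset_of_nonneg
      · intro i hi
        simp only [Finset.mem_image, Finset.mem_Ioc] at hi ⊢
        obtain ⟨j, hj, rfl⟩ := hi
        omega
      · intro i _ _
        positivity
    exact step1.trans (mul_le_mul_of_nonneg_left step2 (by positivity))
  have hAle : A ≤ (1 / (M : ℝ) ^ (s - 1) - 1 / ((k:ℝ)/2) ^ (s - 1)) / (s - 1) := by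
    refine (sum_inv_rpow_le_aux hs hM (le_of_lt hMN)).trans ?_
    rw [div_le_div_iff_of_pos_right hs1]
    have hN0 : (0:ℝ) < N := by exact_mod_cast (by omega : 0 < N)
    have h1 : (N:ℝ) ^ (s-1) ≤ ((k:ℝ)/2) ^ (s-1) :=
      Real.rpow_le_rpow hN0.le hNle (by linarith)
    have h2 : 1 / ((k:ℝ)/2) ^ (s-1) ≤ 1 / (N:ℝ) ^ (s-1) :=
      one_div_le_one_div_of_le (by positivity) h1
    linarith
  have heq : (2 : ℝ) ^ (s + 1) / ((k : ℝ) ^ s * (s - 1)) *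
      (1 / (M : ℝ) ^ (s - 1) - 1 / ((k : ℝ) / 2) ^ (s - 1))
      = 2 * (1 / ((k:ℝ)/2) ^ s) *
        ((1 / (M : ℝ) ^ (s - 1) - 1 / ((k:ℝ)/2) ^ (s - 1)) / (s - 1)) := by
    simp only [Real.div_rpow hK0.le (by norm_num : (0:ℝ) ≤ 2),
      Real.rpow_add_one (by norm_num : (2:ℝ) ≠ 0)]
    have h2s : (0:ℝ) < (2:ℝ) ^ s := by positivity
    have hks : (0:ℝ) < (k:ℝ) ^ s := by positivity
    field_simp
  have hmul := mul_le_mul_of_nonneg_left hAle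
    (by positivity : (0:ℝ) ≤ 2 * (1 / ((k:ℝ)/2) ^ s))
  rw [heq] at *
  linarith [hbound1, hbound2, hmul]
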